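/- For every ε > 0, every continuously differentiable x : [0,l] → ℝ with x(0) = x(l) = 0, every y, μ₂ ∈ ℝ, and every continuously differentiable μ₁ : [0,l] → ℝ with μ₁(0) = μ₁(l) = 0, the following jump estimate holds: ∫₀ˡ (α'(z)x(z) + α(z)x'(z) + β'(z)y + μ₁'(z))² dz + (∫₀ˡ γ(z)x(z) dz + δ·y + μ₂)² ≤ (‖α²‖_∞ + (l²/π²)‖α·α''‖_∞ + (l²/π²)‖γ‖²_{L²} + ε·((l²/π²)‖α'‖_∞ + ‖α‖_∞ + (l²/π²)‖γ‖_{L²}))·‖x'‖²_{L²} + 2·((l/π)·‖α'β' + γδ‖_{L²} + ‖α·β'‖_{L²})·‖x'‖_{L²}·|y| + (‖β'‖²_{L²} + δ² + ε·(‖β'‖_{L²} + |δ|))·y² + (1 + ε⁻¹·(‖α'‖_∞ + ‖β'‖_{L²} + ‖α‖_∞))·‖μ₁'‖²_{L²} + (1 + ε⁻¹·(|δ| + ‖γ‖_{L²}))·μ₂². -/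

import Mathlib

open Filter Topology MeasureTheory intervalIntegral


open Set Real

/-- `‖f‖_{L²}` on `[0,l]`. -/
noncomputable def L2norm (l : ℝ) (f : ℝ → ℝ) : ℝ :=
  Real.sqrt (∫ z in (0:ℝ)..l, (f z)^2)

/-- `‖f‖_∞` on `[0,l]`. -/
noncomputable def CnormInf (l : ℝ) (f : ℝ → ℝ) : ℝ :=
  sSup ((fun z => |f z|) '' Icc 0 l)

lemma myII {l : ℝ} (hl : 0 ≤ l) {f : ℝ → ℝ} (hf : ContinuousOn f (Icc 0 l)) :
    IntervalIntegrable f volume 0 l :=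
  ContinuousOn.intervalIntegrable (by rwa [uIcc_of_le hl])

lemma int_sq_nonneg (l : ℝ) (hl : 0 ≤ l) (f : ℝ → ℝ) :
    0 ≤ ∫ z in (0:ℝ)..l, (f z)^2 :=
  intervalIntegral.integral_nonneg hl (fun z _ => sq_nonneg _)

lemma L2norm_sq (l : ℝ) (hl : 0 ≤ l) (f : ℝ → ℝ) :
    (L2norm l f)^2 = ∫ z in (0:ℝ)..l, (f z)^2 :=
  Real.sq_sqrt (int_sq_nonneg l hl f)

lemma L2norm_nonneg (l : ℝ) (f : ℝ → ℝ) : 0 ≤ L2norm l f := Real.sqrt_nonneg _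

lemma le_cnorm {l : ℝ} {f : ℝ → ℝ} (hf : ContinuousOn f (Icc 0 l))
    {z : ℝ} (hz : z ∈ Icc 0 l) : |f z| ≤ CnormInf l f :=
  le_csSup (isCompact_Icc.bddAbove_image hf.abs) (mem_image_of_mem _ hz)

lemma cnorm_nonneg {l : ℝ} (hl : 0 ≤ l) {f : ℝ → ℝ} (hf : ContinuousOn f (Icc 0 l)) :
    0 ≤ CnormInf l f :=
  le_trans (abs_nonneg (f 0)) (le_cnorm hf (left_mem_Icc.2 hl))

lemma cs_sq {l : ℝ} (hl : 0 ≤ l) {f g : ℝ → ℝ} (hf : ContinuousOn f (Icc 0 l))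
    (hg : ContinuousOn g (Icc 0 l)) :
    (∫ z in (0:ℝ)..l, f z * g z)^2 ≤
      (∫ z in (0:ℝ)..l, (f z)^2) * (∫ z in (0:ℝ)..l, (g z)^2) := by
  set A := ∫ z in (0:ℝ)..l, (f z)^2 with hA
  set B := ∫ z in (0:ℝ)..l, f z * g z with hB
  set C := ∫ z in (0:ℝ)..l, (g z)^2 with hC
  have key : discrim C (2*B) A ≤ 0 := by
    apply discrim_le_zero
    intro t
    have i1 : IntervalIntegrable (fun z => (t*t) * (g z)^2) volume 0 l :=
      myII hl (continuousOn_const.mul (hg.pow 2))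
    have i2 : IntervalIntegrable (fun z => (2*t) * (f z * g z)) volume 0 l :=
      myII hl (continuousOn_const.mul (hf.mul hg))
    have i3 : IntervalIntegrable (fun z => (f z)^2) volume 0 l := myII hl (hf.pow 2)
    have h1 : (0:ℝ) ≤ ∫ z in (0:ℝ)..l, (t * g z + f z)^2 :=
      intervalIntegral.integral_nonneg hl (fun z _ => sq_nonneg _)
    have h2 : (∫ z in (0:ℝ)..l, (t * g z + f z)^2)
        = C * (t*t) + 2*B*t + A := by
      have e : ∀ z ∈ uIcc (0:ℝ) l, (t * g z + f z)^2
          = (t*t) * (g z)^2 + ((2*t) * (f z * g z) + (f z)^2) := fun z _ => by ring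
      rw [intervalIntegral.integral_congr e,
        intervalIntegral.integral_add i1 (i2.add i3),
        intervalIntegral.integral_add i2 i3,
        intervalIntegral.integral_const_mul, intervalIntegral.integral_const_mul]
      ring
    linarith [h2 ▸ h1]
  rw [discrim] at key
  nlinarith [int_sq_nonneg l hl f, int_sq_nonneg l hl g]

lemma cs {l : ℝ} (hl : 0 ≤ l) {f g : ℝ → ℝ} (hf : ContinuousOn f (Icc 0 l))
    (hg : ContinuousOn g (Icc 0 l)) :
    ∫ z in (0:ℝ)..l, f z * g z ≤ L2norm l f * L2norm l g := by
  calc (∫ z in (0:ℝ)..l, f z * g z) ≤ |∫ z in (0:ℝ)..l, f z * g z| := le_abs_self _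
  _ = Real.sqrt ((∫ z in (0:ℝ)..l, f z * g z)^2) := (Real.sqrt_sq_eq_abs _).symm
  _ ≤ Real.sqrt ((∫ z in (0:ℝ)..l, (f z)^2) * (∫ z in (0:ℝ)..l, (g z)^2)) :=
      Real.sqrt_le_sqrt (cs_sq hl hf hg)
  _ = L2norm l f * L2norm l g := Real.sqrt_mul (int_sq_nonneg l hl f) _

lemma cs_abs {l : ℝ} (hl : 0 ≤ l) {f g : ℝ → ℝ} (hf : ContinuousOn f (Icc 0 l))
    (hg : ContinuousOn g (Icc 0 l)) :
    |∫ z in (0:ℝ)..l, f z * g z| ≤ L2norm l f * L2norm l g := by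
  calc |∫ z in (0:ℝ)..l, f z * g z|
      = Real.sqrt ((∫ z in (0:ℝ)..l, f z * g z)^2) := (Real.sqrt_sq_eq_abs _).symm
  _ ≤ Real.sqrt ((∫ z in (0:ℝ)..l, (f z)^2) * (∫ z in (0:ℝ)..l, (g z)^2)) :=
      Real.sqrt_le_sqrt (cs_sq hl hf hg)
  _ = L2norm l f * L2norm l g := Real.sqrt_mul (int_sq_nonneg l hl f) _

lemma wirtinger {l : ℝ} (hl : 0 < l) (x x' : ℝ → ℝ)
    (hx : ∀ z ∈ Icc (0:ℝ) l, HasDerivAt x (x' z) z)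
    (hx'c : ContinuousOn x' (Icc 0 l)) (hx0 : x 0 = 0) (hxl : x l = 0) :
    ∫ z in (0:ℝ)..l, (x z)^2 ≤ (l/π)^2 * ∫ z in (0:ℝ)..l, (x' z)^2 := by
  have hπ := Real.pi_pos
  set c : ℝ := π / l with hcdef
  have hc : 0 < c := div_pos hπ hl
  have hcl : c * l = π := by rw [hcdef]; field_simp
  have hxc : ContinuousOn x (Icc 0 l) := fun z hz => ((hx z hz).continuousAt).continuousWithinAt
  -- sin (c z) > 0 on Ioo 0 l
  have hsin : ∀ z ∈ Ioo (0:ℝ) l, 0 < Real.sin (c * z) := by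
    intro z hz
    apply Real.sin_pos_of_pos_of_lt_pi (mul_pos hc hz.1)
    calc c * z < c * l := by nlinarith [hz.2]
    _ = π := hcl
  set φ : ℝ → ℝ := fun z => Real.cos (c * z) / Real.sin (c * z) with hφdef
  set Φ : ℝ → ℝ := fun z => (x z)^2 * φ z with hΦdef
  set g : ℝ → ℝ := fun z => x' z - c * x z * φ z with hgdef
  set h : ℝ → ℝ := fun z => (x' z)^2 - c^2 * (x z)^2 with hhdef
  -- derivative of c * Φ on Ioo 0 l equals h - g^2
  have hΦd : ∀ z ∈ Ioo (0:ℝ) l, HasDerivAt (fun w => c * Φ w) (h z - (g z)^2) z := by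
    intro z hz
    have hzI : z ∈ Icc (0:ℝ) l := Ioo_subset_Icc_self hz
    have hs := hsin z hz
    have hs' : Real.sin (c * z) ≠ 0 := ne_of_gt hs
    have hlin : HasDerivAt (fun w : ℝ => c * w) c z := by
      simpa using (hasDerivAt_id z).const_mul c
    have hcos : HasDerivAt (fun w : ℝ => Real.cos (c * w)) (-Real.sin (c * z) * c) z :=
      (Real.hasDerivAt_cos (c * z)).comp z hlin
    have hsind : HasDerivAt (fun w : ℝ => Real.sin (c * w)) (Real.cos (c * z) * c) z :=
      (Real.hasDerivAt_sin (c * z)).comp z hlin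
    have hq : HasDerivAt φ ((-Real.sin (c*z) * c * Real.sin (c*z) -
        Real.cos (c*z) * (Real.cos (c*z) * c)) / (Real.sin (c*z))^2) z :=
      hcos.div hsind hs'
    have hx2 : HasDerivAt (fun w => (x w)^2) (2 * x z * x' z) z := by
      simpa [mul_comm, mul_assoc, mul_left_comm] using (hx z hzI).fun_pow 2
    have hprod := (hx2.fun_mul hq).const_mul c
    refine hprod.congr_deriv ?_
    have pyth := Real.sin_sq_add_cos_sq (c * z)
    simp only [hhdef, hgdef, hφdef]
    field_simp
    ring_nf
  -- continuity facts
  have hcosc : Continuous fun z : ℝ => Real.cos (c*z) :=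
    Real.continuous_cos.comp (continuous_const.mul continuous_id)
  have hsinc : Continuous fun z : ℝ => Real.sin (c*z) :=
    Real.continuous_sin.comp (continuous_const.mul continuous_id)
  have hφc : ContinuousOn φ (Ioo 0 l) :=
    ContinuousOn.div hcosc.continuousOn hsinc.continuousOn
      (fun z hz => ne_of_gt (hsin z hz))
  have hgc : ContinuousOn g (Ioo 0 l) :=
    (hx'c.mono Ioo_subset_Icc_self).sub
      ((continuousOn_const.mul (hxc.mono Ioo_subset_Icc_self)).mul hφc)
  have hhc : ContinuousOn h (Icc 0 l) :=
    (hx'c.pow 2).sub (continuousOn_const.mul (hxc.pow 2))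
  have hhI : IntervalIntegrable h volume 0 l :=
    ContinuousOn.intervalIntegrable (by rwa [uIcc_of_le hl.le])
  -- FTC estimate on interior intervals
  have hFTC : ∀ t ∈ Ioo (0:ℝ) (l/2),
      c * Φ (l - t) - c * Φ t ≤ ∫ z in t..(l-t), h z := by
    intro t ht
    have h1 : (0:ℝ) < t := ht.1
    have h2 : t ≤ l - t := by linarith [ht.2]
    have h3 : l - t < l := by linarith
    have hsub : Icc t (l-t) ⊆ Ioo 0 l := fun z hz => ⟨lt_of_lt_of_le h1 hz.1, lt_of_le_of_lt hz.2 h3⟩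
    have huIcc : uIcc t (l-t) = Icc t (l-t) := uIcc_of_le h2
    have hgc' : ContinuousOn (fun z => (g z)^2) (Icc t (l-t)) := (hgc.mono hsub).pow 2
    have hhc' : ContinuousOn h (Icc t (l-t)) := hhc.mono (hsub.trans Ioo_subset_Icc_self)
    have hint : IntervalIntegrable (fun z => h z - (g z)^2) volume t (l-t) :=
      ContinuousOn.intervalIntegrable (by rw [huIcc]; exact hhc'.sub hgc')
    have key : ∫ z in t..(l-t), (h z - (g z)^2) = c * Φ (l-t) - c * Φ t :=
      intervalIntegral.integral_eq_sub_of_hasDerivAt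
        (fun z hz => hΦd z (hsub (huIcc ▸ hz))) hint
    have hsplit : ∫ z in t..(l-t), (h z - (g z)^2)
        = (∫ z in t..(l-t), h z) - ∫ z in t..(l-t), (g z)^2 :=
      intervalIntegral.integral_sub
        (ContinuousOn.intervalIntegrable (by rw [huIcc]; exact hhc'))
        (ContinuousOn.intervalIntegrable (by rw [huIcc]; exact hgc'))
    have hg2 : 0 ≤ ∫ z in t..(l-t), (g z)^2 :=
      intervalIntegral.integral_nonneg h2 (fun z _ => sq_nonneg _)
    linarith [key, hsplit]
  -- limit of the integral
  set F : ℝ → ℝ := fun u => ∫ z in (0:ℝ)..u, h z with hFdef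
  have hFc : ContinuousOn F (Icc 0 l) := by
    have := intervalIntegral.continuousOn_primitive_interval'
      (μ := volume) (f := h) (b₁ := (0:ℝ)) (b₂ := l) (a := 0) hhI left_mem_uIcc
    rwa [uIcc_of_le hl.le] at this
  have hmemIoo : Ioo (0:ℝ) (l/2) ∈ 𝓝[>] (0:ℝ) :=
    Ioo_mem_nhdsGT_of_mem ⟨le_refl 0, half_pos hl⟩
  have hIccmem : Icc (0:ℝ) l ∈ 𝓝[>] (0:ℝ) :=
    mem_of_superset hmemIoo (fun z hz => ⟨hz.1.le, by nlinarith [hz.2, hz.1]⟩)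
  have hF0 : Tendsto F (𝓝[>] (0:ℝ)) (𝓝 (F 0)) :=
    (hFc 0 (left_mem_Icc.2 hl.le)).mono_left (nhdsWithin_le_iff.2 hIccmem)
  have hbase : Tendsto (fun t : ℝ => l - t) (𝓝[>] (0:ℝ)) (𝓝 l) := by
    have : Tendsto (fun t : ℝ => l - t) (𝓝 (0:ℝ)) (𝓝 (l - 0)) :=
      (continuous_const.sub continuous_id).tendsto 0
    simpa using this.mono_left nhdsWithin_le_nhds
  have hsubl : Tendsto (fun t : ℝ => l - t) (𝓝[>] (0:ℝ)) (𝓝[Icc 0 l] l) := by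
    rw [tendsto_nhdsWithin_iff]
    refine ⟨hbase, ?_⟩
    filter_upwards [hmemIoo] with t ht
    exact ⟨by nlinarith [ht.1, ht.2], by linarith [ht.1]⟩
  have hFl : Tendsto (fun t => F (l - t)) (𝓝[>] (0:ℝ)) (𝓝 (F l)) :=
    (hFc l (right_mem_Icc.2 hl.le)).tendsto.comp hsubl
  have hF00 : F 0 = 0 := intervalIntegral.integral_same
  have hTint : Tendsto (fun t => ∫ z in t..(l-t), h z) (𝓝[>] (0:ℝ))
      (𝓝 (∫ z in (0:ℝ)..l, h z)) := by
    have hlim : Tendsto (fun t => F (l - t) - F t) (𝓝[>] (0:ℝ)) (𝓝 (F l)) := by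
      simpa [hF00] using hFl.sub hF0
    refine hlim.congr' ?_
    filter_upwards [hmemIoo] with t ht
    have m1 : IntervalIntegrable h volume 0 (l - t) := by
      apply hhI.mono_set
      rw [uIcc_of_le hl.le, uIcc_of_le (by linarith [ht.1, ht.2] : (0:ℝ) ≤ l - t)]
      exact Icc_subset_Icc (le_refl 0) (by linarith [ht.1])
    have m2 : IntervalIntegrable h volume 0 t := by
      apply hhI.mono_set
      rw [uIcc_of_le hl.le, uIcc_of_le ht.1.le]
      exact Icc_subset_Icc (le_refl 0) (by linarith [ht.2])
    exact intervalIntegral.integral_interval_sub_left m1 m2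
  -- boundary limits
  have hmono : 𝓝[>] (0:ℝ) ≤ 𝓝[≠] (0:ℝ) :=
    nhdsWithin_mono 0 (fun t ht => ne_of_gt ht)
  have slope0 : Tendsto (fun t => x t / t) (𝓝[>] (0:ℝ)) (𝓝 (x' 0)) := by
    have h0 := (hasDerivAt_iff_tendsto_slope.1 (hx 0 ⟨le_refl 0, hl.le⟩)).mono_left hmono
    refine h0.congr (fun t => ?_)
    simp [slope_def_field, hx0]
  have sinlim : Tendsto (fun t => t / Real.sin (c*t)) (𝓝[>] (0:ℝ)) (𝓝 c⁻¹) := by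
    have hlin0 : HasDerivAt (fun t : ℝ => c * t) c 0 := by
      simpa using (hasDerivAt_id (0:ℝ)).const_mul c
    have hds : HasDerivAt (fun t : ℝ => Real.sin (c*t)) c 0 := by
      simpa [Function.comp_def] using (Real.hasDerivAt_sin (c*0)).comp 0 hlin0
    have h1 := (hasDerivAt_iff_tendsto_slope.1 hds).mono_left hmono
    have h2 : Tendsto (fun t => Real.sin (c*t) / t) (𝓝[>] (0:ℝ)) (𝓝 c) := by
      refine h1.congr (fun t => ?_)
      simp [slope_def_field]
    have h3 := h2.inv₀ (ne_of_gt hc)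
    refine h3.congr (fun t => ?_)
    rw [inv_div]
  have coslim : Tendsto (fun t => Real.cos (c*t)) (𝓝[>] (0:ℝ)) (𝓝 1) := by
    have : Tendsto (fun t => Real.cos (c*t)) (𝓝 (0:ℝ)) (𝓝 (Real.cos (c*0))) :=
      hcosc.tendsto 0
    simpa using this.mono_left nhdsWithin_le_nhds
  have idlim : Tendsto (fun t : ℝ => t) (𝓝[>] (0:ℝ)) (𝓝 0) :=
    tendsto_id.mono_left nhdsWithin_le_nhds
  have Φ0 : Tendsto Φ (𝓝[>] (0:ℝ)) (𝓝 0) := by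
    have hP : Tendsto (fun t => ((x t / t) * (x t / t)) * Real.cos (c*t) *
        (t / Real.sin (c*t)) * t) (𝓝[>] (0:ℝ)) (𝓝 (((x' 0 * x' 0) * 1 * c⁻¹) * 0)) :=
      (((slope0.mul slope0).mul coslim).mul sinlim).mul idlim
    rw [mul_zero] at hP
    refine hP.congr' ?_
    filter_upwards [hmemIoo] with t ht
    have hs := ne_of_gt (hsin t ⟨ht.1, by linarith [ht.2]⟩)
    have ht0 : t ≠ 0 := ne_of_gt ht.1
    simp only [hΦdef, hφdef]
    field_simp
  have Φl : Tendsto (fun t => Φ (l - t)) (𝓝[>] (0:ℝ)) (𝓝 0) := by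
    have hmapl : Tendsto (fun t : ℝ => l - t) (𝓝[>] (0:ℝ)) (𝓝[≠] l) := by
      rw [tendsto_nhdsWithin_iff]
      refine ⟨hbase, ?_⟩
      filter_upwards [hmemIoo] with t ht
      exact fun hcon => by simp at hcon; linarith [ht.1, hcon]
    have slopel : Tendsto (fun t => x (l - t) / t) (𝓝[>] (0:ℝ)) (𝓝 (-(x' l))) := by
      have hdl := hasDerivAt_iff_tendsto_slope.1 (hx l ⟨hl.le, le_refl l⟩)
      have h1 : Tendsto (fun t => slope x l (l - t)) (𝓝[>] (0:ℝ)) (𝓝 (x' l)) :=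
        hdl.comp hmapl
      have h2 := h1.neg
      refine h2.congr (fun t => ?_)
      simp only [slope_def_field, hxl]
      rw [sub_zero, show l - t - l = -t by ring, div_neg, neg_neg]
    have hP : Tendsto (fun t => -(((x (l-t) / t) * (x (l-t) / t)) * Real.cos (c*t) *
        (t / Real.sin (c*t)) * t)) (𝓝[>] (0:ℝ))
        (𝓝 (-((((-(x' l)) * (-(x' l))) * 1 * c⁻¹) * 0))) :=
      ((((slopel.mul slopel).mul coslim).mul sinlim).mul idlim).neg
    rw [mul_zero, neg_zero] at hP
    refine hP.congr' ?_
    filter_upwards [hmemIoo] with t ht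
    have hclt : c * (l - t) = π - c * t := by
      rw [mul_sub, hcl]
    have hs := ne_of_gt (hsin t ⟨ht.1, by linarith [ht.2]⟩)
    have ht0 : t ≠ 0 := ne_of_gt ht.1
    simp only [hΦdef, hφdef, hclt, Real.sin_pi_sub, Real.cos_pi_sub]
    field_simp
  have bdry : Tendsto (fun t => c * Φ (l - t) - c * Φ t) (𝓝[>] (0:ℝ)) (𝓝 0) := by
    have := (Φl.const_mul c).sub (Φ0.const_mul c)
    simpa using this
  -- conclude nonnegativity
  have hmain : (0:ℝ) ≤ ∫ z in (0:ℝ)..l, h z := by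
    refine le_of_tendsto_of_tendsto bdry hTint ?_
    filter_upwards [hmemIoo] with t ht
    exact hFTC t ht
  -- unfold h and finish
  have hsplit : (∫ z in (0:ℝ)..l, h z)
      = (∫ z in (0:ℝ)..l, (x' z)^2) - c^2 * ∫ z in (0:ℝ)..l, (x z)^2 := by
    have i1 : IntervalIntegrable (fun z => (x' z)^2) volume 0 l :=
      ContinuousOn.intervalIntegrable (by rw [uIcc_of_le hl.le]; exact hx'c.pow 2)
    have i2 : IntervalIntegrable (fun z => c^2 * (x z)^2) volume 0 l :=
      ContinuousOn.intervalIntegrable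
        (by rw [uIcc_of_le hl.le]; exact continuousOn_const.mul (hxc.pow 2))
    rw [hhdef]
    rw [intervalIntegral.integral_sub i1 i2, intervalIntegral.integral_const_mul]
  have hcc : (l/π)^2 * c^2 = 1 := by
    rw [hcdef]
    field_simp
  have hfin := hsplit ▸ hmain
  calc ∫ z in (0:ℝ)..l, (x z)^2
      = ((l/π)^2 * c^2) * ∫ z in (0:ℝ)..l, (x z)^2 := by rw [hcc]; ring
  _ = (l/π)^2 * (c^2 * ∫ z in (0:ℝ)..l, (x z)^2) := by ring
  _ ≤ (l/π)^2 * ∫ z in (0:ℝ)..l, (x' z)^2 := by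
      apply mul_le_mul_of_nonneg_left (by linarith) (sq_nonneg _)

/-- Young's inequality with weight. -/
lemma young {ε : ℝ} (hε : 0 < ε) {C : ℝ} (hC : 0 ≤ C) (a b : ℝ) :
    2*C*a*b ≤ ε*C*a^2 + ε⁻¹*C*b^2 := by
  rw [inv_eq_one_div, ← sub_nonneg]
  have h : ε*C*a^2 + 1/ε*C*b^2 - 2*C*a*b = C*(ε*a - b)^2/ε := by
    field_simp
    ring
  rw [h]
  positivity

/-- multiplying by a bounded function. -/
lemma L2_mul_le {l : ℝ} (hl : 0 ≤ l) {w v : ℝ → ℝ} (hw : ContinuousOn w (Icc 0 l))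
    (hv : ContinuousOn v (Icc 0 l)) :
    L2norm l (fun z => w z * v z) ≤ CnormInf l w * L2norm l v := by
  have hC := cnorm_nonneg hl hw
  have h1 : (∫ z in (0:ℝ)..l, (w z * v z)^2)
      ≤ ∫ z in (0:ℝ)..l, (CnormInf l w)^2 * (v z)^2 := by
    apply intervalIntegral.integral_mono_on hl
      (myII hl ((hw.mul hv).pow 2))
      (myII hl (continuousOn_const.mul (hv.pow 2)))
    intro z hz
    have hb := le_cnorm hw hz
    have : (w z)^2 ≤ (CnormInf l w)^2 := by
      rw [← sq_abs (w z)]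
      exact pow_le_pow_left₀ (abs_nonneg _) hb 2
    show (w z * v z)^2 ≤ (CnormInf l w)^2 * (v z)^2
    nlinarith [sq_nonneg (v z)]
  calc L2norm l (fun z => w z * v z)
      ≤ Real.sqrt (∫ z in (0:ℝ)..l, (CnormInf l w)^2 * (v z)^2) := Real.sqrt_le_sqrt h1
  _ = CnormInf l w * L2norm l v := by
      rw [intervalIntegral.integral_const_mul, Real.sqrt_mul (sq_nonneg _), Real.sqrt_sq hC]
      rfl

lemma T1_bound {l : ℝ} (hl : 0 < l)
    (α α' α'' : ℝ → ℝ)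
    (hα : ∀ z ∈ Icc (0:ℝ) l, HasDerivAt α (α' z) z)
    (hα' : ∀ z ∈ Icc (0:ℝ) l, HasDerivAt α' (α'' z) z)
    (hα''c : ContinuousOn α'' (Icc 0 l))
    (x x' : ℝ → ℝ) (hx : ∀ z ∈ Icc (0:ℝ) l, HasDerivAt x (x' z) z)
    (hx'c : ContinuousOn x' (Icc 0 l)) (hx0 : x 0 = 0) (hxl : x l = 0)
    (hW : ∫ z in (0:ℝ)..l, (x z)^2 ≤ (l/π)^2 * ∫ z in (0:ℝ)..l, (x' z)^2) :
    ∫ z in (0:ℝ)..l, (α' z * x z + α z * x' z)^2 ≤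
      (CnormInf l (fun z => (α z)^2) + (l/π)^2 * CnormInf l (fun z => α z * α'' z)) *
        ∫ z in (0:ℝ)..l, (x' z)^2 := by
  have hl' := hl.le
  have hxc : ContinuousOn x (Icc 0 l) := fun z hz => ((hx z hz).continuousAt).continuousWithinAt
  have hαc : ContinuousOn α (Icc 0 l) := fun z hz => ((hα z hz).continuousAt).continuousWithinAt
  have hα'c : ContinuousOn α' (Icc 0 l) := fun z hz => ((hα' z hz).continuousAt).continuousWithinAt
  -- integration by parts
  have huI : uIcc (0:ℝ) l = Icc 0 l := uIcc_of_le hl'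
  have hibp : ∫ z in (0:ℝ)..l, (α z * α' z) * (2 * x z * x' z)
      = - ∫ z in (0:ℝ)..l, ((α' z)^2 + α z * α'' z) * (x z)^2 := by
    have hu : ∀ z ∈ uIcc (0:ℝ) l, HasDerivAt (fun w => α w * α' w)
        ((α' z)^2 + α z * α'' z) z := by
      intro z hz
      rw [huI] at hz
      have := (hα z hz).fun_mul (hα' z hz)
      refine this.congr_deriv ?_
      ring
    have hv : ∀ z ∈ uIcc (0:ℝ) l, HasDerivAt (fun w => (x w)^2) (2 * x z * x' z) z := by
      intro z hz
      rw [huI] at hz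
      simpa [mul_comm, mul_assoc, mul_left_comm] using (hx z hz).fun_pow 2
    have hu' : IntervalIntegrable (fun z => (α' z)^2 + α z * α'' z) volume 0 l :=
      myII hl' ((hα'c.pow 2).add (hαc.mul hα''c))
    have hv' : IntervalIntegrable (fun z => 2 * x z * x' z) volume 0 l :=
      myII hl' ((continuousOn_const.mul hxc).mul hx'c)
    have := intervalIntegral.integral_mul_deriv_eq_deriv_mul hu hv hu' hv'
    simpa [hx0, hxl] using this
  -- expansion
  have i1 : IntervalIntegrable (fun z => (α' z)^2 * (x z)^2) volume 0 l :=
    myII hl' ((hα'c.pow 2).mul (hxc.pow 2))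
  have i2 : IntervalIntegrable (fun z => (α z)^2 * (x' z)^2) volume 0 l :=
    myII hl' ((hαc.pow 2).mul (hx'c.pow 2))
  have i3 : IntervalIntegrable (fun z => (α z * α' z) * (2 * x z * x' z)) volume 0 l :=
    myII hl' (((hαc.mul hα'c)).mul ((continuousOn_const.mul hxc).mul hx'c))
  have i4 : IntervalIntegrable (fun z => (α z * α'' z) * (x z)^2) volume 0 l :=
    myII hl' ((hαc.mul hα''c).mul (hxc.pow 2))
  have hexp : ∫ z in (0:ℝ)..l, (α' z * x z + α z * x' z)^2
      = (∫ z in (0:ℝ)..l, (α z)^2 * (x' z)^2)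
        - ∫ z in (0:ℝ)..l, (α z * α'' z) * (x z)^2 := by
    have e : ∀ z ∈ uIcc (0:ℝ) l, (α' z * x z + α z * x' z)^2
        = (α' z)^2 * (x z)^2 + ((α z)^2 * (x' z)^2 +
            (α z * α' z) * (2 * x z * x' z)) := fun z _ => by ring
    rw [intervalIntegral.integral_congr e,
      intervalIntegral.integral_add i1 (i2.add i3),
      intervalIntegral.integral_add i2 i3, hibp]
    have esplit : ∫ z in (0:ℝ)..l, ((α' z)^2 + α z * α'' z) * (x z)^2
        = (∫ z in (0:ℝ)..l, (α' z)^2 * (x z)^2)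
          + ∫ z in (0:ℝ)..l, (α z * α'' z) * (x z)^2 := by
      rw [← intervalIntegral.integral_add i1 i4]
      apply intervalIntegral.integral_congr
      intro z _
      ring
    rw [esplit]
    ring
  rw [hexp]
  -- bound the two pieces
  have hC2 := cnorm_nonneg hl' (hαc.pow 2 : ContinuousOn (fun z => (α z)^2) (Icc 0 l))
  have hCaa := cnorm_nonneg hl' (hαc.mul hα''c : ContinuousOn (fun z => α z * α'' z) (Icc 0 l))
  have hb1 : (∫ z in (0:ℝ)..l, (α z)^2 * (x' z)^2)
      ≤ CnormInf l (fun z => (α z)^2) * ∫ z in (0:ℝ)..l, (x' z)^2 := by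
    rw [← intervalIntegral.integral_const_mul]
    apply intervalIntegral.integral_mono_on hl' i2
      (myII hl' (continuousOn_const.mul (hx'c.pow 2)))
    intro z hz
    have hb := le_cnorm (f := fun z => (α z)^2) (hαc.pow 2 : ContinuousOn (fun z => (α z)^2) (Icc 0 l)) hz
    rw [abs_of_nonneg (sq_nonneg (α z))] at hb
    show α z ^ 2 * x' z ^ 2 ≤ CnormInf l (fun z => (α z)^2) * (x' z)^2
    nlinarith [sq_nonneg (x' z)]
  have hb2 : - (∫ z in (0:ℝ)..l, (α z * α'' z) * (x z)^2)
      ≤ CnormInf l (fun z => α z * α'' z) * ∫ z in (0:ℝ)..l, (x z)^2 := by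
    rw [← intervalIntegral.integral_neg, ← intervalIntegral.integral_const_mul]
    apply intervalIntegral.integral_mono_on hl' i4.neg
      (myII hl' (continuousOn_const.mul (hxc.pow 2)))
    intro z hz
    have hb := le_cnorm (f := fun z => α z * α'' z) (hαc.mul hα''c : ContinuousOn (fun z => α z * α'' z) (Icc 0 l)) hz
    have := neg_abs_le (α z * α'' z)
    simp only [Pi.neg_apply]
    show -(α z * α'' z * x z ^ 2) ≤ CnormInf l (fun z => α z * α'' z) * (x z)^2
    nlinarith [sq_nonneg (x z)]
  have hb3 : CnormInf l (fun z => α z * α'' z) * (∫ z in (0:ℝ)..l, (x z)^2)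
      ≤ CnormInf l (fun z => α z * α'' z) * ((l/π)^2 * ∫ z in (0:ℝ)..l, (x' z)^2) :=
    mul_le_mul_of_nonneg_left hW hCaa
  have := le_trans hb2 hb3
  calc (∫ z in (0:ℝ)..l, (α z)^2 * (x' z)^2) - ∫ z in (0:ℝ)..l, (α z * α'' z) * (x z)^2
      ≤ CnormInf l (fun z => (α z)^2) * (∫ z in (0:ℝ)..l, (x' z)^2)
        + CnormInf l (fun z => α z * α'' z) * ((l/π)^2 * ∫ z in (0:ℝ)..l, (x' z)^2) := by
        linarith
  _ = (CnormInf l (fun z => (α z)^2) + (l/π)^2 * CnormInf l (fun z => α z * α'' z)) *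
        ∫ z in (0:ℝ)..l, (x' z)^2 := by ring


set_option maxHeartbeats 2000000 in
/-- jump estimate for `V(g(x,y,μ))` in the proof of Proposition 3. -/
theorem stmt9 (l : ℝ) (hl : 0 < l)
    (α α' α'' : ℝ → ℝ)
    (hα : ∀ z ∈ Icc (0:ℝ) l, HasDerivAt α (α' z) z)
    (hα' : ∀ z ∈ Icc (0:ℝ) l, HasDerivAt α' (α'' z) z)
    (hα''c : ContinuousOn α'' (Icc 0 l))
    (β β' : ℝ → ℝ) (hβ : ∀ z ∈ Icc (0:ℝ) l, HasDerivAt β (β' z) z)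
    (hβ'c : ContinuousOn β' (Icc 0 l)) (hβ0 : β 0 = 0) (hβl : β l = 0)
    (γ : ℝ → ℝ) (hγ : ContinuousOn γ (Icc 0 l)) (δ : ℝ)
    (ε : ℝ) (hε : 0 < ε)
    (x x' : ℝ → ℝ) (hx : ∀ z ∈ Icc (0:ℝ) l, HasDerivAt x (x' z) z)
    (hx'c : ContinuousOn x' (Icc 0 l)) (hx0 : x 0 = 0) (hxl : x l = 0)
    (y μ₂ : ℝ)
    (μ₁ μ₁' : ℝ → ℝ) (hμ₁ : ∀ z ∈ Icc (0:ℝ) l, HasDerivAt μ₁ (μ₁' z) z)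
    (hμ₁'c : ContinuousOn μ₁' (Icc 0 l)) (hμ₁0 : μ₁ 0 = 0) (hμ₁l : μ₁ l = 0) :
    (∫ z in (0:ℝ)..l, (α' z * x z + α z * x' z + β' z * y + μ₁' z)^2) +
      ((∫ z in (0:ℝ)..l, γ z * x z) + δ * y + μ₂)^2 ≤
    (CnormInf l (fun z => (α z)^2) + (l^2 / π^2) * CnormInf l (fun z => α z * α'' z) +
        (l^2 / π^2) * (L2norm l γ)^2 +
        ε * ((l^2 / π^2) * CnormInf l α' + CnormInf l α + (l^2 / π^2) * L2norm l γ)) *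
      (L2norm l x')^2 +
    2 * ((l / π) * L2norm l (fun z => α' z * β' z + γ z * δ) +
        L2norm l (fun z => α z * β' z)) * L2norm l x' * |y| +
    ((L2norm l β')^2 + δ^2 + ε * (L2norm l β' + |δ|)) * y^2 +
    (1 + ε⁻¹ * (CnormInf l α' + L2norm l β' + CnormInf l α)) * (L2norm l μ₁')^2 +
    (1 + ε⁻¹ * (|δ| + L2norm l γ)) * μ₂^2 := by
  have hπ := Real.pi_pos
  have hl' := hl.le
  have huI : uIcc (0:ℝ) l = Icc 0 l := uIcc_of_le hl'
  -- continuity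
  have hxc : ContinuousOn x (Icc 0 l) := fun z hz => ((hx z hz).continuousAt).continuousWithinAt
  have hαc : ContinuousOn α (Icc 0 l) := fun z hz => ((hα z hz).continuousAt).continuousWithinAt
  have hα'c : ContinuousOn α' (Icc 0 l) := fun z hz => ((hα' z hz).continuousAt).continuousWithinAt
  -- abbreviations
  have hq : l^2 / π^2 = (l/π)^2 := (div_pow l π 2).symm
  rw [hq]
  set r : ℝ := l / π with hrdef
  have hr0 : 0 ≤ r := by positivity
  set K := L2norm l x' with hK
  set X := L2norm l x with hXdef
  set Nβ := L2norm l β' with hNβ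
  set Nγ := L2norm l γ with hNγ
  set Nm := L2norm l μ₁' with hNm
  set N1 := L2norm l (fun z => α' z * β' z + γ z * δ) with hN1
  set N2 := L2norm l (fun z => α z * β' z) with hN2
  set Ca := CnormInf l α with hCa
  set Ca' := CnormInf l α' with hCa'
  set Ca2 := CnormInf l (fun z => (α z)^2) with hCa2
  set Caa := CnormInf l (fun z => α z * α'' z) with hCaa
  -- nonnegativity
  have hK0 : 0 ≤ K := Real.sqrt_nonneg _
  have hX0 : 0 ≤ X := Real.sqrt_nonneg _
  have hNβ0 : 0 ≤ Nβ := Real.sqrt_nonneg _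
  have hNγ0 : 0 ≤ Nγ := Real.sqrt_nonneg _
  have hNm0 : 0 ≤ Nm := Real.sqrt_nonneg _
  have hN10 : 0 ≤ N1 := Real.sqrt_nonneg _
  have hN20 : 0 ≤ N2 := Real.sqrt_nonneg _
  have hCa0 : 0 ≤ Ca := cnorm_nonneg hl' hαc
  have hCa'0 : 0 ≤ Ca' := cnorm_nonneg hl' hα'c
  -- squared L2 norms
  have hK2 : K^2 = ∫ z in (0:ℝ)..l, (x' z)^2 := L2norm_sq l hl' x'
  have hX2 : X^2 = ∫ z in (0:ℝ)..l, (x z)^2 := L2norm_sq l hl' x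
  have hNβ2 : Nβ^2 = ∫ z in (0:ℝ)..l, (β' z)^2 := L2norm_sq l hl' β'
  have hNm2 : Nm^2 = ∫ z in (0:ℝ)..l, (μ₁' z)^2 := L2norm_sq l hl' μ₁'
  -- Wirtinger
  have hW : (∫ z in (0:ℝ)..l, (x z)^2) ≤ r^2 * ∫ z in (0:ℝ)..l, (x' z)^2 :=
    wirtinger hl x x' hx hx'c hx0 hxl
  have hXrK : X ≤ r * K := by
    rw [hXdef]
    show Real.sqrt (∫ z in (0:ℝ)..l, (x z)^2) ≤ r * K
    calc Real.sqrt (∫ z in (0:ℝ)..l, (x z)^2)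
        ≤ Real.sqrt (r^2 * ∫ z in (0:ℝ)..l, (x' z)^2) := Real.sqrt_le_sqrt hW
    _ = r * K := by rw [Real.sqrt_mul (sq_nonneg r), Real.sqrt_sq hr0]; rfl
  -- integrability of all pieces
  have i1 : IntervalIntegrable (fun z => (α' z * x z + α z * x' z)^2) volume 0 l :=
    myII hl' (((hα'c.mul hxc).add (hαc.mul hx'c)).pow 2)
  have i2 : IntervalIntegrable (fun z => (2*y) * (α' z * β' z * x z)) volume 0 l :=
    myII hl' (continuousOn_const.mul ((hα'c.mul hβ'c).mul hxc))
  have i3 : IntervalIntegrable (fun z => (2*y) * (α z * β' z * x' z)) volume 0 l :=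
    myII hl' (continuousOn_const.mul ((hαc.mul hβ'c).mul hx'c))
  have i4 : IntervalIntegrable (fun z => 2 * (α' z * x z * μ₁' z)) volume 0 l :=
    myII hl' (continuousOn_const.mul ((hα'c.mul hxc).mul hμ₁'c))
  have i5 : IntervalIntegrable (fun z => 2 * (α z * x' z * μ₁' z)) volume 0 l :=
    myII hl' (continuousOn_const.mul ((hαc.mul hx'c).mul hμ₁'c))
  have i6 : IntervalIntegrable (fun z => y^2 * (β' z)^2) volume 0 l :=
    myII hl' (continuousOn_const.mul (hβ'c.pow 2))
  have i7 : IntervalIntegrable (fun z => (2*y) * (β' z * μ₁' z)) volume 0 l :=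
    myII hl' (continuousOn_const.mul (hβ'c.mul hμ₁'c))
  have i8 : IntervalIntegrable (fun z => (μ₁' z)^2) volume 0 l :=
    myII hl' (hμ₁'c.pow 2)
  have iab : IntervalIntegrable (fun z => α' z * β' z * x z) volume 0 l :=
    myII hl' ((hα'c.mul hβ'c).mul hxc)
  have igx : IntervalIntegrable (fun z => δ * (γ z * x z)) volume 0 l :=
    myII hl' (continuousOn_const.mul (hγ.mul hxc))
  -- expansion of the first integral
  have hLHS1 : (∫ z in (0:ℝ)..l, (α' z * x z + α z * x' z + β' z * y + μ₁' z)^2)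
      = (∫ z in (0:ℝ)..l, (α' z * x z + α z * x' z)^2)
        + (2*y) * (∫ z in (0:ℝ)..l, α' z * β' z * x z)
        + (2*y) * (∫ z in (0:ℝ)..l, α z * β' z * x' z)
        + 2 * (∫ z in (0:ℝ)..l, α' z * x z * μ₁' z)
        + 2 * (∫ z in (0:ℝ)..l, α z * x' z * μ₁' z)
        + y^2 * (∫ z in (0:ℝ)..l, (β' z)^2)
        + (2*y) * (∫ z in (0:ℝ)..l, β' z * μ₁' z)
        + ∫ z in (0:ℝ)..l, (μ₁' z)^2 := by
    rw [show (∫ z in (0:ℝ)..l, (α' z * x z + α z * x' z + β' z * y + μ₁' z)^2)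
        = ∫ z in (0:ℝ)..l, ((α' z * x z + α z * x' z)^2
          + ((2*y) * (α' z * β' z * x z)
          + ((2*y) * (α z * β' z * x' z)
          + (2 * (α' z * x z * μ₁' z)
          + (2 * (α z * x' z * μ₁' z)
          + (y^2 * (β' z)^2
          + ((2*y) * (β' z * μ₁' z)
          + (μ₁' z)^2))))))) from
      intervalIntegral.integral_congr (fun z _ => by ring)]
    rw [intervalIntegral.integral_add i1 (i2.add (i3.add (i4.add (i5.add (i6.add (i7.add i8)))))),
      intervalIntegral.integral_add i2 (i3.add (i4.add (i5.add (i6.add (i7.add i8))))),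
      intervalIntegral.integral_add i3 (i4.add (i5.add (i6.add (i7.add i8)))),
      intervalIntegral.integral_add i4 (i5.add (i6.add (i7.add i8))),
      intervalIntegral.integral_add i5 (i6.add (i7.add i8)),
      intervalIntegral.integral_add i6 (i7.add i8),
      intervalIntegral.integral_add i7 i8]
    simp only [intervalIntegral.integral_const_mul]
    ring
  -- splitting of the mixed integral
  set G := ∫ z in (0:ℝ)..l, γ z * x z with hG
  set J := ∫ z in (0:ℝ)..l, (α' z * β' z + γ z * δ) * x z with hJ
  have hJsplit : J = (∫ z in (0:ℝ)..l, α' z * β' z * x z) + δ * G := by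
    rw [hJ, show (∫ z in (0:ℝ)..l, (α' z * β' z + γ z * δ) * x z)
        = ∫ z in (0:ℝ)..l, (α' z * β' z * x z + δ * (γ z * x z)) from
      intervalIntegral.integral_congr (fun z _ => by ring)]
    rw [intervalIntegral.integral_add iab igx, intervalIntegral.integral_const_mul]
  -- B1 : main square term
  have B1 : (∫ z in (0:ℝ)..l, (α' z * x z + α z * x' z)^2) ≤ (Ca2 + r^2 * Caa) * K^2 := by
    rw [hK2]
    exact T1_bound hl α α' α'' hα hα' hα''c x x' hx hx'c hx0 hxl hW
  -- B2 : cross term with y (combined with δ y G)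
  have hJb : |J| ≤ N1 * X := cs_abs hl' ((hα'c.mul hβ'c).add (hγ.mul continuousOn_const)) hxc
  have B2 : 2 * y * J ≤ 2 * r * N1 * K * |y| := by
    have h1 : |J| ≤ N1 * (r * K) :=
      hJb.trans (mul_le_mul_of_nonneg_left hXrK hN10)
    have h2 : y * J ≤ |y| * (N1 * (r * K)) := by
      calc y * J ≤ |y * J| := le_abs_self _
      _ = |y| * |J| := abs_mul y J
      _ ≤ |y| * (N1 * (r * K)) := mul_le_mul_of_nonneg_left h1 (abs_nonneg y)
    linarith [h2]
  -- B3
  have hJc : |∫ z in (0:ℝ)..l, (α z * β' z) * x' z| ≤ N2 * K :=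
    cs_abs hl' (hαc.mul hβ'c) hx'c
  have B3 : (2*y) * (∫ z in (0:ℝ)..l, α z * β' z * x' z) ≤ 2 * N2 * K * |y| := by
    have heq : (∫ z in (0:ℝ)..l, α z * β' z * x' z)
        = ∫ z in (0:ℝ)..l, (α z * β' z) * x' z :=
      intervalIntegral.integral_congr (fun z _ => by ring)
    rw [heq]
    have h2 : y * (∫ z in (0:ℝ)..l, (α z * β' z) * x' z) ≤ |y| * (N2 * K) := by
      calc y * _ ≤ |y * (∫ z in (0:ℝ)..l, (α z * β' z) * x' z)| := le_abs_self _
      _ = |y| * |∫ z in (0:ℝ)..l, (α z * β' z) * x' z| := abs_mul _ _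
      _ ≤ |y| * (N2 * K) := mul_le_mul_of_nonneg_left hJc (abs_nonneg y)
    linarith [h2]
  -- B4
  have hL4 : L2norm l (fun z => α' z * x z) ≤ Ca' * X := L2_mul_le hl' hα'c hxc
  have hI4 : |∫ z in (0:ℝ)..l, (α' z * x z) * μ₁' z| ≤ (Ca' * (r * K)) * Nm := by
    refine (cs_abs hl' (hα'c.mul hxc) hμ₁'c).trans ?_
    have : L2norm l (fun z => α' z * x z) ≤ Ca' * (r * K) :=
      hL4.trans (mul_le_mul_of_nonneg_left hXrK hCa'0)
    exact mul_le_mul_of_nonneg_right this hNm0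
  have B4 : 2 * (∫ z in (0:ℝ)..l, α' z * x z * μ₁' z)
      ≤ ε * (r^2 * Ca') * K^2 + ε⁻¹ * Ca' * Nm^2 := by
    have heq : (∫ z in (0:ℝ)..l, α' z * x z * μ₁' z)
        = ∫ z in (0:ℝ)..l, (α' z * x z) * μ₁' z :=
      intervalIntegral.integral_congr (fun z _ => by ring)
    rw [heq]
    have hy := young hε hCa'0 (r*K) Nm
    have h2 : (∫ z in (0:ℝ)..l, (α' z * x z) * μ₁' z) ≤ Ca' * (r*K) * Nm :=
      (le_abs_self _).trans hI4
    linarith [hy, h2]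
  -- B5
  have hL5 : L2norm l (fun z => α z * x' z) ≤ Ca * K := L2_mul_le hl' hαc hx'c
  have hI5 : |∫ z in (0:ℝ)..l, (α z * x' z) * μ₁' z| ≤ (Ca * K) * Nm :=
    (cs_abs hl' (hαc.mul hx'c) hμ₁'c).trans (mul_le_mul_of_nonneg_right hL5 hNm0)
  have B5 : 2 * (∫ z in (0:ℝ)..l, α z * x' z * μ₁' z)
      ≤ ε * Ca * K^2 + ε⁻¹ * Ca * Nm^2 := by
    have heq : (∫ z in (0:ℝ)..l, α z * x' z * μ₁' z)
        = ∫ z in (0:ℝ)..l, (α z * x' z) * μ₁' z :=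
      intervalIntegral.integral_congr (fun z _ => by ring)
    rw [heq]
    have hy := young hε hCa0 K Nm
    have h2 : (∫ z in (0:ℝ)..l, (α z * x' z) * μ₁' z) ≤ Ca * K * Nm :=
      (le_abs_self _).trans hI5
    linarith [hy, h2]
  -- B7
  have hI7 : |∫ z in (0:ℝ)..l, β' z * μ₁' z| ≤ Nβ * Nm := cs_abs hl' hβ'c hμ₁'c
  have B7 : (2*y) * (∫ z in (0:ℝ)..l, β' z * μ₁' z)
      ≤ ε * Nβ * y^2 + ε⁻¹ * Nβ * Nm^2 := by
    have hy := young hε hNβ0 |y| Nm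
    rw [sq_abs] at hy
    have h2 : y * (∫ z in (0:ℝ)..l, β' z * μ₁' z) ≤ |y| * (Nβ * Nm) := by
      calc y * _ ≤ |y * (∫ z in (0:ℝ)..l, β' z * μ₁' z)| := le_abs_self _
      _ = |y| * |∫ z in (0:ℝ)..l, β' z * μ₁' z| := abs_mul _ _
      _ ≤ |y| * (Nβ * Nm) := mul_le_mul_of_nonneg_left hI7 (abs_nonneg y)
    linarith [hy, h2]
  -- B9, B10 : terms with G
  have hGb : |G| ≤ Nγ * (r * K) :=
    (cs_abs hl' hγ hxc).trans (mul_le_mul_of_nonneg_left hXrK hNγ0)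
  have B9 : G^2 ≤ r^2 * Nγ^2 * K^2 := by
    have h3 : G^2 ≤ (Nγ*(r*K))*(Nγ*(r*K)) := by
      rw [pow_two, ← abs_mul_abs_self]
      exact mul_self_le_mul_self (abs_nonneg G) hGb
    exact h3.trans_eq (by ring)
  have B10 : 2 * μ₂ * G ≤ ε * (r^2 * Nγ) * K^2 + ε⁻¹ * Nγ * μ₂^2 := by
    have hy := young hε hNγ0 (r*K) |μ₂|
    rw [sq_abs] at hy
    have h2 : μ₂ * G ≤ |μ₂| * (Nγ * (r * K)) := by
      calc μ₂ * G ≤ |μ₂ * G| := le_abs_self _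
      _ = |μ₂| * |G| := abs_mul _ _
      _ ≤ |μ₂| * (Nγ * (r * K)) := mul_le_mul_of_nonneg_left hGb (abs_nonneg μ₂)
    linarith [hy, h2]
  -- B11
  have B11 : 2 * (δ * y) * μ₂ ≤ ε * |δ| * y^2 + ε⁻¹ * |δ| * μ₂^2 := by
    have hy := young hε (abs_nonneg δ) |y| |μ₂|
    rw [sq_abs, sq_abs] at hy
    have h2 : δ * y * μ₂ ≤ |δ| * |y| * |μ₂| := by
      calc δ * y * μ₂ ≤ |δ * y * μ₂| := le_abs_self _
      _ = |δ| * |y| * |μ₂| := by rw [abs_mul, abs_mul]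
    linarith [hy, h2]
  -- second part expansion
  have hLHS2 : (G + δ * y + μ₂)^2
      = G^2 + δ^2 * y^2 + μ₂^2 + 2 * (δ * y) * G + 2 * μ₂ * G + 2 * (δ * y) * μ₂ := by
    ring
  -- combine first cross terms : 2y ∫α'β'x + 2 δ y G = 2 y J
  have hcross : (2*y) * (∫ z in (0:ℝ)..l, α' z * β' z * x z) + 2 * (δ * y) * G
      = 2 * y * J := by rw [hJsplit]; ring
  -- final assembly
  rw [hLHS1, hLHS2, ← hNβ2, ← hNm2]
  linarith [B1, B2, B3, B4, B5, B7, B9, B10, B11, hcross]
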